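/- Let x = (x_S)_{S ∈ 𝒮^P, P ∈ 𝒫} be any family of nonnegative reals indexed by suffix chains, and let x̃ be its projection. Define Ũ_j = ∑_{j' ∈ P : j' ⪯ j} x̃^{i(j)}_{j'} for each job j on chain P, and for a suffix chain S ∈ 𝒮^P define w_S = ∑_{j ∈ P : j ∈ S_{i(j)}} w_j. Then ∑_{j ∈ [n]} w_j Ũ_j = ∑_{P ∈ 𝒫} ∑_{S ∈ 𝒮^P} w_S x_S; that is, the objective value of x̃ in the compact LP (P2) equals the objective value of x in the configuration LP (P). -/
import Mathlib


/-- A suffix chain with `k` layers of a chain with `m` jobs.  The jobs of the chain are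
`Fin m` (ordered by the precedence order `⪯`), and the chain is extended by the dummy
element `⊥`, encoded as the last element of `Fin (m+1)`.  A suffix is encoded by its
starting point `a : Fin (m+1)` (so `a = ⊥` encodes the empty suffix), namely
`suffix a = {j : Fin m | a ≤ j.castSucc}`, and `suffix a ⊇ suffix b ↔ a ≤ b`.
A suffix chain `S₁ ⊇ S₂ ⊇ … ⊇ S_k` is therefore a monotone map `Fin k → Fin (m+1)`
of starting points. -/
def SuffixChain (k m : ℕ) : Type :=
  {S : Fin k → Fin (m + 1) // ∀ i i' : Fin k, i ≤ i' → S i ≤ S i'}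

noncomputable instance (k m : ℕ) : Fintype (SuffixChain k m) :=
  Subtype.fintype _

/-- The projection `x̃` of a family `x` indexed by suffix chains:
`x̃ⁱⱼ = ∑_{S ∈ 𝒮 : Sᵢ = suffix j} x_S`. -/
noncomputable def proj {k m : ℕ} (x : SuffixChain k m → ℝ) (i : Fin k) (j : Fin (m + 1)) : ℝ :=
  ∑ S : SuffixChain k m, if S.1 i = j then x S else 0

lemma key {m : ℕ} (a : Fin (m+1)) (j : Fin m) (c : ℝ) :
    ∑ j' ∈ Finset.Iic j, (if a = j'.castSucc then c else 0)
      = if a ≤ j.castSucc then c else 0 := by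
  by_cases h : a ≤ j.castSucc
  · have hlt : a < Fin.last m := lt_of_le_of_lt h (Fin.castSucc_lt_last j)
    set a' := a.castPred hlt.ne with ha'
    have hcs : a'.castSucc = a := Fin.castSucc_castPred a hlt.ne
    rw [if_pos h]
    rw [Finset.sum_eq_single a']
    · rw [if_pos hcs.symm]
    · intro b _ hb
      rw [if_neg]
      intro hab
      exact hb (Fin.castSucc_injective m (by rw [hcs, ← hab])).symm
    · intro hmem
      exact absurd (Finset.mem_Iic.mpr (by rw [← Fin.castSucc_le_castSucc_iff, hcs]; exact h)) hmem
  · rw [if_neg h]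
    apply Finset.sum_eq_zero
    intro b hb
    rw [if_neg]
    intro hab
    exact h (hab ▸ Fin.castSucc_le_castSucc_iff.mpr (Finset.mem_Iic.mp hb))

/-- Let `x ≥ 0` be indexed by suffix chains, let `x̃` be its projection,
let `Ũ_j = ∑_{j' ⪯ j} x̃^{i(j)}_{j'}`, and for `S ∈ 𝒮^P` let
`w_S = ∑_{j ∈ P : j ∈ S_{i(j)}} w_j`.  Then
`∑_{j ∈ [n]} w_j Ũ_j = ∑_{P ∈ 𝒫} ∑_{S ∈ 𝒮^P} w_S x_S`: the objective value of `x̃` in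
the compact LP (P2) equals the objective value of `x` in the configuration LP (P).
Here chain `P ∈ Fin q` has jobs `Fin (m P)`, `w P j` is the penalty of job `j` of
chain `P`, and `iop P j ∈ Fin k` is the index `i(j)` of its deadline;
`j ∈ S_{i(j)}` means `S.1 (iop P j) ≤ j.castSucc`. -/
theorem stmt3 (q k : ℕ) (m : Fin q → ℕ)
    (w : (P : Fin q) → Fin (m P) → ℕ)
    (iop : (P : Fin q) → Fin (m P) → Fin k)
    (x : (P : Fin q) → SuffixChain k (m P) → ℝ)
    (hx : ∀ (P : Fin q) (S : SuffixChain k (m P)), 0 ≤ x P S) :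
    ∑ P : Fin q, ∑ j : Fin (m P),
        (w P j : ℝ) * (∑ j' ∈ Finset.Iic j, proj (x P) (iop P j) j'.castSucc)
      = ∑ P : Fin q, ∑ S : SuffixChain k (m P),
          (∑ j ∈ Finset.univ.filter (fun j : Fin (m P) => S.1 (iop P j) ≤ j.castSucc),
            (w P j : ℝ)) * x P S := by
  refine Finset.sum_congr rfl (fun P _ => ?_)
  simp only [proj]
  calc ∑ j : Fin (m P), (w P j : ℝ) *
        ∑ j' ∈ Finset.Iic j, ∑ S : SuffixChain k (m P),
          (if S.1 (iop P j) = j'.castSucc then x P S else 0)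
      = ∑ j : Fin (m P), ∑ S : SuffixChain k (m P),
          (if S.1 (iop P j) ≤ j.castSucc then (w P j : ℝ) * x P S else 0) := by
        refine Finset.sum_congr rfl (fun j _ => ?_)
        rw [Finset.sum_comm, Finset.mul_sum]
        refine Finset.sum_congr rfl (fun S _ => ?_)
        rw [key, mul_ite, mul_zero]
    _ = _ := by
        rw [Finset.sum_comm]
        refine Finset.sum_congr rfl (fun S _ => ?_)
        rw [Finset.sum_mul, ← Finset.sum_filter]
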